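/- (Offset boundary of the initial weights.) Let 𝓓 and Q be probability measures on ℝ^d, let W^V ∈ ℝ^{m×d} with ‖W^V‖_F ≤ M_V, let W^K ∈ ℝ^{k×d}, and let φ : ℝ^k → ℝ^r be measurable with ‖x‖ ≤ M_x and ‖φ(W^K x)‖ ≤ M_φ holding almost everywhere under both 𝓓 and Q. Write φ̃(x) := φ(W^K x), M_Q := 𝔼_{x∼Q}[ x φ̃(x)ᵀ ] ∈ ℝ^{d×r}, M_D := 𝔼_{x∼𝓓}[ x φ̃(x)ᵀ ] ∈ ℝ^{d×r}, and suppose Σ_φ := 𝔼_{x∼𝓓}[ φ̃(x) φ̃(x)ᵀ ] is invertible. Let η > 0, let 𝔼[W₀] := η W^V M_Q denote the expectation of the one-step distilled weight W₀ = (η/N) Σᵢ W^V xᵢ φ̃(xᵢ)ᵀ built from i.i.d. demonstrations xᵢ ∼ Q, and let W* := W^V M_D Σ_φ^{−1} be the optimal reference weight. Then the offset ΔW := 𝔼[W₀] − W* satisfies ‖ΔW‖_F ≤ M_V ( M_x M_φ ‖η I_r − Σ_φ^{−1}‖₂ + ‖Σ_φ^{−1}‖₂ ‖M_Q − M_D‖_F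 ). -/

import Mathlib

open scoped BigOperators
open MeasureTheory
open scoped Matrix

/-- The Frobenius norm of a real matrix. -/
noncomputable def frobNorm {m r : ℕ} (A : Matrix (Fin m) (Fin r) ℝ) : ℝ :=
  Real.sqrt (∑ a, ∑ s, (A a s) ^ 2)

/-- The spectral (ℓ²-operator) norm of a square real matrix. -/
noncomputable def specNorm {r : ℕ} (A : Matrix (Fin r) (Fin r) ℝ) : ℝ :=
  ‖LinearMap.toContinuousLinearMap (Matrix.toEuclideanLin A)‖

/-- The mapped feature vector `φ̃(x) = φ(W^K x)`. -/
noncomputable def featOut {k r d : ℕ} (WK : Matrix (Fin k) (Fin d) ℝ)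
    (φ : EuclideanSpace ℝ (Fin k) → EuclideanSpace ℝ (Fin r))
    (x : EuclideanSpace ℝ (Fin d)) : EuclideanSpace ℝ (Fin r) :=
  φ (WithLp.toLp 2 (fun c => ∑ b, WK c b * x b))

section FrobAux

attribute [local instance] Matrix.frobeniusSeminormedAddCommGroup

lemma frobNorm_eq_norm {m r : ℕ} (A : Matrix (Fin m) (Fin r) ℝ) : frobNorm A = ‖A‖ := by
  rw [Matrix.frobenius_norm_def, frobNorm, Real.sqrt_eq_rpow]
  congr 1
  refine Finset.sum_congr rfl fun a _ => Finset.sum_congr rfl fun s _ => ?_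
  rw [Real.norm_eq_abs, Real.rpow_two, sq_abs]

lemma frobNorm_nonneg {m r : ℕ} (A : Matrix (Fin m) (Fin r) ℝ) : 0 ≤ frobNorm A :=
  Real.sqrt_nonneg _

lemma frobNorm_add_le {m r : ℕ} (A B : Matrix (Fin m) (Fin r) ℝ) :
    frobNorm (A + B) ≤ frobNorm A + frobNorm B := by
  simp only [frobNorm_eq_norm]; exact norm_add_le A B

lemma frobNorm_mul_le {m d r : ℕ} (A : Matrix (Fin m) (Fin d) ℝ) (B : Matrix (Fin d) (Fin r) ℝ) :
    frobNorm (A * B) ≤ frobNorm A * frobNorm B := by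
  simp only [frobNorm_eq_norm]; exact Matrix.frobenius_norm_mul A B

end FrobAux

lemma euclid_norm_sq {ι : Type*} [Fintype ι] (v : EuclideanSpace ℝ ι) :
    ‖v‖ ^ 2 = ∑ i, (v i) ^ 2 := by
  rw [EuclideanSpace.norm_eq, Real.sq_sqrt (by positivity)]
  simp [Real.norm_eq_abs, sq_abs]

section SpecAux

open scoped Matrix.Norms.L2Operator

lemma specNorm_eq_norm {r : ℕ} (A : Matrix (Fin r) (Fin r) ℝ) : specNorm A = ‖A‖ := rfl

lemma specNorm_nonneg {r : ℕ} (A : Matrix (Fin r) (Fin r) ℝ) : 0 ≤ specNorm A :=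
  norm_nonneg _

lemma frobNorm_mul_specNorm_le {m r : ℕ} (A : Matrix (Fin m) (Fin r) ℝ)
    (B : Matrix (Fin r) (Fin r) ℝ) : frobNorm (A * B) ≤ frobNorm A * specNorm B := by
  have hc : 0 ≤ specNorm B := specNorm_nonneg B
  have key : ∀ a : Fin m, ∑ s, ((A * B) a s) ^ 2 ≤ specNorm B ^ 2 * ∑ t, (A a t) ^ 2 := by
    intro a
    set u : EuclideanSpace ℝ (Fin r) := (WithLp.equiv 2 _).symm (A a) with hu
    set v : EuclideanSpace ℝ (Fin r) := (EuclideanSpace.equiv (Fin r) ℝ).symm (Bᴴ.mulVec (A a)) with hv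
    have h1 : ‖v‖ ≤ ‖Bᴴ‖ * ‖u‖ := Matrix.l2_opNorm_mulVec Bᴴ u
    have h2 : ‖Bᴴ‖ = specNorm B := by rw [Matrix.l2_opNorm_conjTranspose, specNorm_eq_norm]
    have hvs : ∀ s, v s = (A * B) a s := by
      intro s
      show (Bᴴ.mulVec (A a)) s = _
      simp [Matrix.mulVec, Matrix.mul_apply, dotProduct, Matrix.conjTranspose_apply,
        mul_comm]
    have hus : ∀ t, u t = A a t := fun t => rfl
    have e1 : ∑ s, ((A * B) a s) ^ 2 = ‖v‖ ^ 2 := by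
      rw [euclid_norm_sq]
      exact Finset.sum_congr rfl fun s _ => by rw [hvs s]
    have e2 : ∑ t, (A a t) ^ 2 = ‖u‖ ^ 2 := by
      rw [euclid_norm_sq]
      exact Finset.sum_congr rfl fun t _ => by rw [hus t]
    rw [e1, e2]
    calc ‖v‖ ^ 2 ≤ (specNorm B * ‖u‖) ^ 2 := by
          apply pow_le_pow_left₀ (norm_nonneg v)
          rw [← h2]; exact h1
      _ = specNorm B ^ 2 * ‖u‖ ^ 2 := by ring
  calc frobNorm (A * B) ≤ Real.sqrt (specNorm B ^ 2 * ∑ a, ∑ t, (A a t) ^ 2) := by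
        apply Real.sqrt_le_sqrt
        rw [Finset.mul_sum]
        exact Finset.sum_le_sum fun a _ => key a
    _ = frobNorm A * specNorm B := by
        rw [Real.sqrt_mul (sq_nonneg _), Real.sqrt_sq hc, frobNorm]; ring

end SpecAux

lemma frobNorm_moment_le {d r : ℕ} (μ : Measure (EuclideanSpace ℝ (Fin d)))
    [IsProbabilityMeasure μ]
    (f : EuclideanSpace ℝ (Fin d) → EuclideanSpace ℝ (Fin r)) (hf : Measurable f)
    (Mx Mφ : ℝ) (hMx : ∀ᵐ x ∂μ, ‖x‖ ≤ Mx) (hMf : ∀ᵐ x ∂μ, ‖f x‖ ≤ Mφ)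
    (M : Matrix (Fin d) (Fin r) ℝ) (hM : ∀ b s, M b s = ∫ x, x b * f x s ∂μ) :
    frobNorm M ≤ Mx * Mφ := by
  set g : EuclideanSpace ℝ (Fin d) → EuclideanSpace ℝ (Fin d × Fin r) :=
    fun x => (WithLp.equiv 2 _).symm (fun p => x p.1 * f x p.2) with hg
  have hgapp : ∀ x p, g x p = x p.1 * f x p.2 := fun x p => rfl
  have hgnorm : ∀ x, ‖g x‖ = ‖x‖ * ‖f x‖ := by
    intro x
    have h2 : ‖g x‖ ^ 2 = (‖x‖ * ‖f x‖) ^ 2 := by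
      rw [euclid_norm_sq, mul_pow, euclid_norm_sq x, euclid_norm_sq (f x),
        Finset.sum_mul_sum, Fintype.sum_prod_type]
      exact Finset.sum_congr rfl fun b _ => Finset.sum_congr rfl fun s _ => by
        rw [hgapp]; ring
    have := congrArg Real.sqrt h2
    rwa [Real.sqrt_sq (norm_nonneg _), Real.sqrt_sq (by positivity)] at this
  have hgm : Measurable g := by
    apply (WithLp.measurable_toLp 2 _).comp
    apply measurable_pi_lambda
    intro p
    exact ((measurable_pi_apply p.1).comp (WithLp.measurable_ofLp 2 _)).mul
      ((measurable_pi_apply p.2).comp ((WithLp.measurable_ofLp 2 _).comp hf))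
  have hbound : ∀ᵐ x ∂μ, ‖g x‖ ≤ Mx * Mφ := by
    filter_upwards [hMx, hMf] with x h1 h2
    rw [hgnorm]
    exact mul_le_mul h1 h2 (norm_nonneg _) (le_trans (norm_nonneg x) h1)
  have hint : Integrable g μ :=
    Integrable.mono' (integrable_const (Mx * Mφ)) hgm.aestronglyMeasurable hbound
  have hproj : ∀ p : Fin d × Fin r, (∫ x, g x ∂μ) p = M p.1 p.2 := by
    intro p
    have h := (EuclideanSpace.proj p (𝕜 := ℝ)).integral_comp_comm hint
    rw [hM]
    have : (∫ x, g x ∂μ) p = EuclideanSpace.proj p (𝕜 := ℝ) (∫ x, g x ∂μ) := rfl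
    rw [this, ← h]
    exact integral_congr_ae (Filter.Eventually.of_forall fun x => hgapp x p)
  calc frobNorm M = ‖∫ x, g x ∂μ‖ := by
        rw [frobNorm, EuclideanSpace.norm_eq]
        congr 1
        rw [Fintype.sum_prod_type]
        exact Finset.sum_congr rfl fun b _ => Finset.sum_congr rfl fun s _ => by
          rw [hproj (b, s)]; simp [Real.norm_eq_abs, sq_abs]
    _ ≤ Mx * Mφ * (μ Set.univ).toReal := norm_integral_le_of_norm_le_const hbound
    _ = Mx * Mφ := by simp

lemma measurable_featOut {k r d : ℕ} (WK : Matrix (Fin k) (Fin d) ℝ)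
    (φ : EuclideanSpace ℝ (Fin k) → EuclideanSpace ℝ (Fin r)) (hφ : Measurable φ) :
    Measurable (featOut WK φ) := by
  apply hφ.comp
  have hb : ∀ b : Fin d, Measurable (fun x : EuclideanSpace ℝ (Fin d) => x b) := fun b =>
    (measurable_pi_apply b).comp (WithLp.measurable_ofLp 2 _)
  apply (WithLp.measurable_toLp 2 _).comp
  apply measurable_pi_lambda
  intro c
  exact Finset.measurable_sum Finset.univ fun b _ => (hb b).const_mul (WK c b)

/-- **Offset boundary of the initial weights in the ICL-KD process.**
With `M_Q = 𝔼_Q[x φ̃(x)ᵀ]`, `M_D = 𝔼_𝓓[x φ̃(x)ᵀ]`, invertible `Σ_φ = 𝔼_𝓓[φ̃(x) φ̃(x)ᵀ]`,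
expected one-step distilled weight `𝔼[W₀] = η W^V M_Q` and optimal reference weight
`W* = W^V M_D Σ_φ⁻¹`, the offset `ΔW = 𝔼[W₀] − W*` satisfies
`‖ΔW‖_F ≤ M_V (M_x M_φ ‖η I_r − Σ_φ⁻¹‖₂ + ‖Σ_φ⁻¹‖₂ ‖M_Q − M_D‖_F)`. -/
theorem offset_boundary_initial_weights (d m k r : ℕ)
    (𝓓 Q : Measure (EuclideanSpace ℝ (Fin d)))
    [IsProbabilityMeasure 𝓓] [IsProbabilityMeasure Q]
    (WV : Matrix (Fin m) (Fin d) ℝ) (M_V : ℝ) (hWV : frobNorm WV ≤ M_V)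
    (WK : Matrix (Fin k) (Fin d) ℝ)
    (φ : EuclideanSpace ℝ (Fin k) → EuclideanSpace ℝ (Fin r)) (hφ : Measurable φ)
    (Mx Mφ : ℝ)
    (hMxD : ∀ᵐ x ∂𝓓, ‖x‖ ≤ Mx) (hMxQ : ∀ᵐ x ∂Q, ‖x‖ ≤ Mx)
    (hMφD : ∀ᵐ x ∂𝓓, ‖featOut WK φ x‖ ≤ Mφ) (hMφQ : ∀ᵐ x ∂Q, ‖featOut WK φ x‖ ≤ Mφ)
    (MQ MD : Matrix (Fin d) (Fin r) ℝ)
    (hMQ : ∀ b s, MQ b s = ∫ x, x b * featOut WK φ x s ∂Q)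
    (hMD : ∀ b s, MD b s = ∫ x, x b * featOut WK φ x s ∂𝓓)
    (covφ : Matrix (Fin r) (Fin r) ℝ)
    (hcovφ : ∀ s t, covφ s t = ∫ x, featOut WK φ x s * featOut WK φ x t ∂𝓓)
    (hinv : IsUnit covφ)
    (η : ℝ) (hη : 0 < η)
    (EW₀ Wstar ΔW : Matrix (Fin m) (Fin r) ℝ)
    (hEW₀ : EW₀ = η • (WV * MQ))
    (hWstar : Wstar = WV * MD * covφ⁻¹)
    (hΔW : ΔW = EW₀ - Wstar) :
    frobNorm ΔW
      ≤ M_V * (Mx * Mφ * specNorm (η • (1 : Matrix (Fin r) (Fin r) ℝ) - covφ⁻¹)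
                + specNorm covφ⁻¹ * frobNorm (MQ - MD)) := by
  set X1 : Matrix (Fin r) (Fin r) ℝ := η • (1 : Matrix (Fin r) (Fin r) ℝ) - covφ⁻¹ with hX1
  set C : Matrix (Fin d) (Fin r) ℝ := MQ * X1 + (MQ - MD) * covφ⁻¹ with hCdef
  have hC : ΔW = WV * C := by
    rw [hΔW, hEW₀, hWstar, hCdef, hX1]
    simp only [Matrix.mul_add, Matrix.mul_sub, Matrix.sub_mul, Matrix.mul_smul,
      Matrix.smul_mul, Matrix.mul_one, Matrix.mul_assoc]
    abel
  have hMV0 : 0 ≤ M_V := le_trans (frobNorm_nonneg WV) hWV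
  have hMx0 : 0 ≤ Mx := by
    obtain ⟨x, hx⟩ := hMxQ.exists
    exact le_trans (norm_nonneg x) hx
  have hMφ0 : 0 ≤ Mφ := by
    obtain ⟨x, hx⟩ := hMφQ.exists
    exact le_trans (norm_nonneg _) hx
  have hs1 : 0 ≤ specNorm X1 := specNorm_nonneg _
  have hs2 : 0 ≤ specNorm covφ⁻¹ := specNorm_nonneg _
  have hMQle : frobNorm MQ ≤ Mx * Mφ :=
    frobNorm_moment_le Q _ (measurable_featOut WK φ hφ) Mx Mφ hMxQ hMφQ MQ hMQ
  have hfC : frobNorm C ≤ Mx * Mφ * specNorm X1 + specNorm covφ⁻¹ * frobNorm (MQ - MD) := by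
    calc frobNorm C ≤ frobNorm (MQ * X1) + frobNorm ((MQ - MD) * covφ⁻¹) :=
          frobNorm_add_le _ _
      _ ≤ frobNorm MQ * specNorm X1 + frobNorm (MQ - MD) * specNorm covφ⁻¹ :=
          add_le_add (frobNorm_mul_specNorm_le _ _) (frobNorm_mul_specNorm_le _ _)
      _ ≤ Mx * Mφ * specNorm X1 + specNorm covφ⁻¹ * frobNorm (MQ - MD) := by
          rw [mul_comm (specNorm covφ⁻¹)]
          exact add_le_add (mul_le_mul_of_nonneg_right hMQle hs1) le_rfl
  calc frobNorm ΔW = frobNorm (WV * C) := by rw [hC]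
    _ ≤ frobNorm WV * frobNorm C := frobNorm_mul_le _ _
    _ ≤ M_V * (Mx * Mφ * specNorm X1 + specNorm covφ⁻¹ * frobNorm (MQ - MD)) := by
        apply mul_le_mul hWV hfC (frobNorm_nonneg _) hMV0
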